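/- Let X be a separable reflexive Banach space with property (m_p) for some p > 1, and let T be a bounded linear operator on X. Define α(T) as the infimum of ‖x‖ over all weak cluster points x of maximizing sequences for T. If α(T) < 1, then α(T) = 0. -/

import Mathlib

open Filter Topology

/-- Weak convergence of a sequence in a normed space. -/
def WeakTendsto {X : Type*} [NormedAddCommGroup X] [NormedSpace ℝ X]
    (x : ℕ → X) (x₀ : X) : Prop :=
  ∀ f : X →L[ℝ] ℝ, Tendsto (fun n => f (x n)) atTop (𝓝 (f x₀))

/-- Property (m_p). -/
def PropertyMp {X : Type*} [NormedAddCommGroup X] [NormedSpace ℝ X] (p : ℝ) : Prop :=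
  ∀ x : ℕ → X, WeakTendsto x 0 → ∀ y : X,
    limsup (fun n => ‖x n + y‖ ^ p) atTop = limsup (fun n => ‖x n‖ ^ p) atTop + ‖y‖ ^ p

/-- A maximizing sequence for a bounded operator: unit vectors with ‖T xₙ‖ → ‖T‖. -/
def MaximizingSeq {X : Type*} [NormedAddCommGroup X] [NormedSpace ℝ X]
    (T : X →L[ℝ] X) (x : ℕ → X) : Prop :=
  (∀ n, ‖x n‖ = 1) ∧ Tendsto (fun n => ‖T (x n)‖) atTop (𝓝 ‖T‖)

/-- Weak cluster point of some maximizing sequence for T. -/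
def WeakClusterPtOfMaximizing {X : Type*} [NormedAddCommGroup X] [NormedSpace ℝ X]
    (T : X →L[ℝ] X) (x₀ : X) : Prop :=
  ∃ x : ℕ → X, MaximizingSeq T x ∧ ∃ φ : ℕ → ℕ, StrictMono φ ∧ WeakTendsto (x ∘ φ) x₀

/-- The essential norm: distance to the compact operators. -/
noncomputable def essNorm {X : Type*} [NormedAddCommGroup X] [NormedSpace ℝ X]
    (T : X →L[ℝ] X) : ℝ :=
  sInf {c : ℝ | ∃ K : X →L[ℝ] X, IsCompactOperator K ∧ c = ‖T - K‖}

/-- Minimal weak maximizing limit. -/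
noncomputable def alphaT {X : Type*} [NormedAddCommGroup X] [NormedSpace ℝ X]
    (T : X →L[ℝ] X) : ℝ :=
  sInf {r : ℝ | ∃ x₀ : X, WeakClusterPtOfMaximizing T x₀ ∧ r = ‖x₀‖}

/-- Extract a subsequence converging to the limsup. -/
lemma aux_subseq_limsup (c : ℕ → ℝ) (hub : ∃ C, ∀ n, c n ≤ C) (hlb : ∃ D, ∀ n, D ≤ c n) :
    ∃ ψ : ℕ → ℕ, StrictMono ψ ∧
      Tendsto (fun k => c (ψ k)) atTop (𝓝 (limsup c atTop)) := by
  obtain ⟨C, hC⟩ := hub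
  obtain ⟨D, hD⟩ := hlb
  have hbdd : IsBoundedUnder (· ≤ ·) atTop c := Filter.isBoundedUnder_of ⟨C, hC⟩
  have hcob : IsCoboundedUnder (· ≤ ·) atTop c :=
    Filter.IsBoundedUnder.isCoboundedUnder_le (Filter.isBoundedUnder_of ⟨D, fun n => hD n⟩)
  set L := limsup c atTop with hL
  have hfreq : ∀ k : ℕ, ∃ᶠ n in atTop, L - 1 / (k + 1) < c n := fun k =>
    frequently_lt_of_lt_limsup hcob (by
      have : (0:ℝ) < 1 / (k + 1) := by positivity
      linarith)
  obtain ⟨ψ, hψ, hψ2⟩ := extraction_forall_of_frequently hfreq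
  refine ⟨ψ, hψ, ?_⟩
  rw [Metric.tendsto_atTop]
  intro ε hε
  have hup : ∀ᶠ n in atTop, c n < L + ε :=
    eventually_lt_of_limsup_lt (by linarith) hbdd
  obtain ⟨N1, hN1⟩ := eventually_atTop.mp ((hψ.tendsto_atTop).eventually hup)
  obtain ⟨K, hK⟩ := exists_nat_one_div_lt hε
  refine ⟨max N1 K, fun k hk => ?_⟩
  have h1 := hψ2 k
  have h2 : 1 / ((k:ℝ) + 1) ≤ 1 / ((K:ℝ) + 1) := by
    apply one_div_le_one_div_of_le
    · positivity
    · have : (K:ℝ) ≤ k := Nat.cast_le.mpr (le_trans (le_max_right N1 K) hk)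
      linarith
  have h3 := hN1 k (le_trans (le_max_left N1 K) hk)
  rw [Real.dist_eq, abs_sub_lt_iff]
  constructor <;> linarith

lemma aux_key {X : Type*} [NormedAddCommGroup X] [NormedSpace ℝ X]
    {p : ℝ} (hp : 1 < p) (hmp : PropertyMp (X := X) p)
    (T : X →L[ℝ] X) {x₀ : X} (hwcp : WeakClusterPtOfMaximizing T x₀)
    (ha : ‖x₀‖ < 1) : WeakClusterPtOfMaximizing T 0 := by
  obtain ⟨x, ⟨hx1, hx2⟩, φ, hφ, hw⟩ := hwcp
  have hp0 : (0:ℝ) < p := lt_trans one_pos hp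
  have hpne : p ≠ 0 := ne_of_gt hp0
  set a := ‖x₀‖ with haa
  set y : ℕ → X := x ∘ φ with hy
  have hy1 : ∀ n, ‖y n‖ = 1 := fun n => hx1 (φ n)
  have hy2 : Tendsto (fun n => ‖T (y n)‖) atTop (𝓝 ‖T‖) := hx2.comp hφ.tendsto_atTop
  set z : ℕ → X := fun n => y n - x₀ with hz
  have hzw : WeakTendsto z 0 := by
    intro f
    have h1 : Tendsto (fun n => f (y n) - f x₀) atTop (𝓝 (f x₀ - f x₀)) :=
      (hw f).sub tendsto_const_nhds
    simpa [hz, map_sub, map_zero, sub_self] using h1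
  set M := ‖T‖ with hM
  have hM0 : 0 ≤ M := norm_nonneg T
  set B := 1 - a ^ p with hB
  have haps : a ^ p < 1 := Real.rpow_lt_one (norm_nonneg _) ha hp0
  have hB0 : 0 < B := by rw [hB]; linarith
  have hz_ls : limsup (fun n => ‖z n‖ ^ p) atTop = B := by
    have hmp1 := hmp z hzw x₀
    have h1 : (fun n => ‖z n + x₀‖ ^ p) = fun _ => (1:ℝ) := by
      funext n
      rw [hz]
      simp only [sub_add_cancel]
      rw [hy1 n, Real.one_rpow]
    rw [h1, limsup_const] at hmp1
    rw [hB]; linarith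
  have hzb : ∀ n, ‖z n‖ ≤ 2 := fun n => by
    calc ‖z n‖ ≤ ‖y n‖ + ‖x₀‖ := norm_sub_le _ _
    _ ≤ 2 := by rw [hy1 n]; linarith
  have hzbp : ∀ n, ‖z n‖ ^ p ≤ 2 ^ p := fun n =>
    Real.rpow_le_rpow (norm_nonneg _) (hzb n) hp0.le
  -- second application of (m_p)
  have hTzw : WeakTendsto (fun n => T (z n)) 0 := by
    intro f
    have := hzw (f.comp T)
    simpa using this
  have hmp2 := hmp (fun n => T (z n)) hTzw (T x₀)
  have hTy : Tendsto (fun n => ‖T (y n)‖ ^ p) atTop (𝓝 (M ^ p)) :=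
    ((Real.continuousAt_rpow_const M p (Or.inr hp0.le)).tendsto).comp hy2
  have hTy_ls : limsup (fun n => ‖T (z n) + T x₀‖ ^ p) atTop = M ^ p := by
    have heq : (fun n => ‖T (z n) + T x₀‖ ^ p) = fun n => ‖T (y n)‖ ^ p := by
      funext n
      congr 2
      rw [← map_add]
      congr 1
      rw [hz]
      exact sub_add_cancel _ _
    rw [heq]
    exact hTy.limsup_eq
  have hTz_ls : limsup (fun n => ‖T (z n)‖ ^ p) atTop = M ^ p - ‖T x₀‖ ^ p := by
    rw [hTy_ls] at hmp2; linarith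
  -- pointwise bound
  have hpt : ∀ n, ‖T (z n)‖ ^ p ≤ M ^ p * ‖z n‖ ^ p := fun n => by
    calc ‖T (z n)‖ ^ p ≤ (M * ‖z n‖) ^ p :=
          Real.rpow_le_rpow (norm_nonneg _) (T.le_opNorm _) hp0.le
    _ = M ^ p * ‖z n‖ ^ p := Real.mul_rpow hM0 (norm_nonneg _)
  have hMp0 : 0 ≤ M ^ p := Real.rpow_nonneg hM0 p
  have hcob : IsCoboundedUnder (· ≤ ·) atTop (fun n => ‖T (z n)‖ ^ p) :=
    isCoboundedUnder_le_of_le atTop (fun n => Real.rpow_nonneg (norm_nonneg _) p)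
  have hup : limsup (fun n => ‖T (z n)‖ ^ p) atTop ≤ M ^ p * B := by
    apply le_of_forall_pos_le_add
    intro ε hε
    have hεM : 0 < ε / (M ^ p + 1) := by positivity
    have hev : ∀ᶠ n in atTop, ‖z n‖ ^ p < B + ε / (M ^ p + 1) := by
      apply eventually_lt_of_limsup_lt
      · rw [hz_ls]; linarith
      · exact Filter.isBoundedUnder_of ⟨2 ^ p, hzbp⟩
    apply limsup_le_of_le hcob
    filter_upwards [hev] with n hn
    have hstep : M ^ p * (ε / (M ^ p + 1)) ≤ ε := by
      rw [mul_comm, div_mul_eq_mul_div, div_le_iff₀ (by positivity)]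
      nlinarith
    calc ‖T (z n)‖ ^ p ≤ M ^ p * ‖z n‖ ^ p := hpt n
    _ ≤ M ^ p * (B + ε / (M ^ p + 1)) := mul_le_mul_of_nonneg_left hn.le hMp0
    _ = M ^ p * B + M ^ p * (ε / (M ^ p + 1)) := by ring
    _ ≤ M ^ p * B + ε := by linarith
  have hTx0_le : ‖T x₀‖ ^ p ≤ M ^ p * a ^ p := by
    calc ‖T x₀‖ ^ p ≤ (M * a) ^ p :=
          Real.rpow_le_rpow (norm_nonneg _) (T.le_opNorm x₀) hp0.le
    _ = M ^ p * a ^ p := Real.mul_rpow hM0 (norm_nonneg _)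
  have hTz_val : limsup (fun n => ‖T (z n)‖ ^ p) atTop = M ^ p * B := by
    rw [hTz_ls] at hup ⊢
    have hBe : M ^ p * B = M ^ p - M ^ p * a ^ p := by rw [hB]; ring
    rw [hBe]; linarith
  -- b
  set b := B ^ p⁻¹ with hbdef
  have hb0 : 0 < b := Real.rpow_pos_of_pos hB0 _
  have hbp : b ^ p = B := Real.rpow_inv_rpow hB0.le hpne
  -- find subsequence ψ with ‖z (ψ k)‖ → b and ‖T (z (ψ k))‖/‖z (ψ k)‖ → M
  have main : ∃ ψ : ℕ → ℕ, StrictMono ψ ∧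
      Tendsto (fun k => ‖z (ψ k)‖) atTop (𝓝 b) ∧
      Tendsto (fun k => ‖T (z (ψ k))‖ / ‖z (ψ k)‖) atTop (𝓝 M) := by
    rcases eq_or_lt_of_le hM0 with hMz | hMpos
    · -- T = 0
      have hT0 : T = 0 := by rwa [← norm_eq_zero, ← hM, eq_comm]
      obtain ⟨ψ, hψ, hψt⟩ := aux_subseq_limsup (fun n => ‖z n‖ ^ p)
        ⟨2 ^ p, hzbp⟩ ⟨0, fun n => Real.rpow_nonneg (norm_nonneg _) p⟩
      rw [hz_ls] at hψt
      refine ⟨ψ, hψ, ?_, ?_⟩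
      · have hcont : ContinuousAt (fun t : ℝ => t ^ p⁻¹) B :=
          Real.continuousAt_rpow_const _ _ (Or.inr (by positivity))
        have h2 : Tendsto (fun k => (‖z (ψ k)‖ ^ p) ^ p⁻¹) atTop (𝓝 (B ^ p⁻¹)) :=
          hcont.tendsto.comp hψt
        have heq : ∀ k, (‖z (ψ k)‖ ^ p) ^ p⁻¹ = ‖z (ψ k)‖ := fun k =>
          Real.rpow_rpow_inv (norm_nonneg _) hpne
        rw [hbdef]
        simpa only [heq] using h2
      · have : (fun k => ‖T (z (ψ k))‖ / ‖z (ψ k)‖) = fun _ => (0:ℝ) := by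
          funext k; rw [hT0]; simp
        rw [this, ← hMz]
        exact tendsto_const_nhds
    · -- M > 0
      obtain ⟨ψ, hψ, hψt⟩ := aux_subseq_limsup (fun n => ‖T (z n)‖ ^ p)
        ⟨M ^ p * 2 ^ p, fun n => le_trans (hpt n)
          (mul_le_mul_of_nonneg_left (hzbp n) hMp0)⟩
        ⟨0, fun n => Real.rpow_nonneg (norm_nonneg _) p⟩
      rw [hTz_val] at hψt
      have hTzt : Tendsto (fun k => ‖T (z (ψ k))‖) atTop (𝓝 (M * b)) := by
        have hcont : ContinuousAt (fun t : ℝ => t ^ p⁻¹) (M ^ p * B) :=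
          Real.continuousAt_rpow_const _ _ (Or.inr (by positivity))
        have h2 : Tendsto (fun k => (‖T (z (ψ k))‖ ^ p) ^ p⁻¹) atTop (𝓝 ((M ^ p * B) ^ p⁻¹)) :=
          hcont.tendsto.comp hψt
        have heq : ∀ k, (‖T (z (ψ k))‖ ^ p) ^ p⁻¹ = ‖T (z (ψ k))‖ := fun k =>
          Real.rpow_rpow_inv (norm_nonneg _) hpne
        have hval : (M ^ p * B) ^ p⁻¹ = M * b := by
          rw [Real.mul_rpow hMp0 hB0.le, Real.rpow_rpow_inv hM0 hpne, hbdef]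
        rw [← hval]
        simpa only [heq] using h2
      have hzt : Tendsto (fun k => ‖z (ψ k)‖) atTop (𝓝 b) := by
        rw [Metric.tendsto_atTop]
        intro ε hε
        -- lower bound eventually
        have hlow : ∀ᶠ k in atTop, M * (b - ε) < ‖T (z (ψ k))‖ :=
          hTzt.eventually (eventually_gt_nhds (by nlinarith))
        -- upper bound eventually (on the full sequence)
        have hupz : ∀ᶠ n in atTop, ‖z n‖ ^ p < (b + ε) ^ p := by
          apply eventually_lt_of_limsup_lt
          · rw [hz_ls, ← hbp]
            exact Real.rpow_lt_rpow hb0.le (by linarith) hp0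
          · exact Filter.isBoundedUnder_of ⟨2 ^ p, hzbp⟩
        have hupz2 : ∀ᶠ k in atTop, ‖z (ψ k)‖ ^ p < (b + ε) ^ p :=
          (hψ.tendsto_atTop).eventually hupz
        obtain ⟨N1, hN1⟩ := eventually_atTop.mp hlow
        obtain ⟨N2, hN2⟩ := eventually_atTop.mp hupz2
        refine ⟨max N1 N2, fun k hk => ?_⟩
        have hl := hN1 k (le_trans (le_max_left _ _) hk)
        have hu := hN2 k (le_trans (le_max_right _ _) hk)
        have hub : ‖z (ψ k)‖ < b + ε := by
          by_contra hcon
          push_neg at hcon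
          exact absurd (Real.rpow_le_rpow (by positivity) hcon hp0.le) (not_le.mpr hu)
        have hlb : b - ε < ‖z (ψ k)‖ := by
          have h3 : M * (b - ε) < M * ‖z (ψ k)‖ := lt_of_lt_of_le hl (T.le_opNorm _)
          exact (mul_lt_mul_iff_right₀ hMpos).mp h3
        rw [Real.dist_eq, abs_sub_lt_iff]
        constructor <;> linarith
      refine ⟨ψ, hψ, hzt, ?_⟩
      have := hTzt.div hzt hb0.ne'
      have hMb : M * b / b = M := by field_simp
      rwa [hMb] at this
  obtain ⟨ψ, hψ, hzt, hTu⟩ := main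
  -- shift so that norms are nonzero
  obtain ⟨K, hK⟩ := eventually_atTop.mp (hzt.eventually (eventually_gt_nhds (half_lt_self hb0)))
  have hnz : ∀ k, ‖z (ψ (k + K))‖ ≠ 0 := fun k =>
    ne_of_gt (lt_trans (half_pos hb0) (hK (k + K) (Nat.le_add_left K k)))
  set u : ℕ → X := fun k => ‖z (ψ (k + K))‖⁻¹ • z (ψ (k + K)) with hu
  have hu1 : ∀ k, ‖u k‖ = 1 := fun k => by
    rw [hu]
    simp only [norm_smul, norm_inv, norm_norm]
    exact inv_mul_cancel₀ (hnz k)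
  have hzsh : Tendsto (fun k => ‖z (ψ (k + K))‖) atTop (𝓝 b) :=
    (tendsto_add_atTop_iff_nat K).mpr hzt
  have hTush : Tendsto (fun k => ‖T (z (ψ (k + K)))‖ / ‖z (ψ (k + K))‖) atTop (𝓝 M) :=
    (tendsto_add_atTop_iff_nat K).mpr hTu
  have hu2 : Tendsto (fun k => ‖T (u k)‖) atTop (𝓝 M) := by
    have heq : ∀ k, ‖T (u k)‖ = ‖T (z (ψ (k + K)))‖ / ‖z (ψ (k + K))‖ := fun k => by
      rw [hu]
      simp only [map_smul, norm_smul, norm_inv, norm_norm]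
      rw [inv_mul_eq_div]
    simpa only [heq] using hTush
  have huw : WeakTendsto u 0 := by
    intro f
    have h1 : Tendsto (fun k => f (z (ψ (k + K)))) atTop (𝓝 0) := by
      have h2 := (hzw f).comp hψ.tendsto_atTop
      have h3 := (tendsto_add_atTop_iff_nat K).mpr h2
      simpa [map_zero] using h3
    have h4 := h1.div hzsh hb0.ne'
    have heq : ∀ k, f (u k) = f (z (ψ (k + K))) / ‖z (ψ (k + K))‖ := fun k => by
      rw [hu]
      simp only [map_smul, smul_eq_mul]
      rw [inv_mul_eq_div]
    simp only [heq, map_zero]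
    simpa only [zero_div, Pi.div_def] using h4
  exact ⟨u, ⟨hu1, hu2⟩, id, strictMono_id, by simpa [Function.comp] using huw⟩

theorem stmt1 {X : Type*} [NormedAddCommGroup X] [NormedSpace ℝ X] [CompleteSpace X]
    [TopologicalSpace.SeparableSpace X]
    (hrefl : Function.Surjective (NormedSpace.inclusionInDoubleDual ℝ X))
    {p : ℝ} (hp : 1 < p) (hmp : PropertyMp (X := X) p)
    (T : X →L[ℝ] X) (h : alphaT T < 1) : alphaT T = 0 := by
  have hdef : alphaT T
      = sInf {r : ℝ | ∃ x₀ : X, WeakClusterPtOfMaximizing T x₀ ∧ r = ‖x₀‖} := rfl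
  set S := {r : ℝ | ∃ x₀ : X, WeakClusterPtOfMaximizing T x₀ ∧ r = ‖x₀‖} with hSdef
  have hSnn : ∀ r ∈ S, (0:ℝ) ≤ r := by
    rintro r ⟨x₀, -, rfl⟩
    exact norm_nonneg _
  have hbdd : BddBelow S := ⟨0, fun r hr => hSnn r hr⟩
  by_cases hne : S.Nonempty
  · have hlt : ∃ r ∈ S, r < 1 := by
      by_contra hcon
      push_neg at hcon
      have h1 : (1:ℝ) ≤ sInf S := le_csInf hne hcon
      skip
      linarith
    obtain ⟨r, hrS, hr1⟩ := hlt
    obtain ⟨x₀, hwcp, rfl⟩ := hrS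
    have h0 : WeakClusterPtOfMaximizing T 0 := aux_key hp hmp T hwcp hr1
    have h0S : (0:ℝ) ∈ S := ⟨0, h0, norm_zero.symm⟩
    rw [hdef]
    exact le_antisymm (csInf_le hbdd h0S) (le_csInf hne hSnn)
  · rw [Set.not_nonempty_iff_eq_empty] at hne
    rw [hdef, hne, Real.sInf_empty]
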